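/- Fix v̄ > 0 and 0 < ω < v̄. For ξ ∈ (0, 1), let p̂(ξ) = min{ (2 − ξ)ω, v̄ }, let r(ξ) = ( ln v̄ − ln(ω(2 − ξ)) − ln(ξ(2 − ξ))/(1 − ξ) + 1 )^{-1} if (2 − ξ)ω < v̄ and r(ξ) = ( (v̄ − ω)/((1 − ξ)ω) + (ln ω − ln(ξv̄))/(1 − ξ) )^{-1} if (2 − ξ)ω ≥ v̄, and define q_ξ(v) = 0 for v ∈ [0, ξp̂(ξ)), q_ξ(v) = (r(ξ)/(1 − ξ))·ln( v/(ξp̂(ξ)) ) for v ∈ [ξp̂(ξ), ω), q_ξ(v) = 1 − r(ξ)·ln( v̄/p̂(ξ) ) for v ∈ [ω, p̂(ξ)), and q_ξ(v) = 1 − r(ξ)·ln( v̄/v ) for v ∈ [p̂(ξ), v̄]. Then for any ξ†, ξ‡ ∈ (0, 1) with ξ† ≤ ξ‡, one has q_{ξ‡}(v) ≤ q_{ξ†}(v) for all v ∈ [0, v̄]; that is, the optimal price distribution derived from the higher conversion rate ξ‡ stochastically dominates the one derived from ξ†. -/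

import Mathlib

open Set Real

noncomputable def S1f (vb w ξ : ℝ) : ℝ := Real.log vb - Real.log w - Real.log (2-ξ) + 1
noncomputable def T1f (ξ : ℝ) : ℝ := -(Real.log ξ + Real.log (2-ξ)) / (1-ξ)
noncomputable def S2f (vb w ξ : ℝ) : ℝ := (vb - w) / ((1-ξ)*w)
noncomputable def T2f (vb w ξ : ℝ) : ℝ := (Real.log w - Real.log ξ - Real.log vb) / (1-ξ)

lemma corelog {y : ℝ} (hy : 0 < y) : -Real.log y ≤ (1-y)/y := by
  have h := Real.log_le_sub_one_of_pos (inv_pos.mpr hy)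
  rw [Real.log_inv] at h
  have h2 : y⁻¹ - 1 = (1-y)/y := by field_simp
  linarith

lemma core2 {ξ : ℝ} (h0 : 0 < ξ) (h1 : ξ < 1) :
    -(Real.log ξ + Real.log (2-ξ)) ≤ (1-ξ)^2/ξ := by
  have h2 : (0:ℝ) < 2 - ξ := by linarith
  have hy : 0 < ξ * (2-ξ) := mul_pos h0 h2
  have h := corelog hy
  rw [Real.log_mul h0.ne' h2.ne'] at h
  have e1 : (1 - ξ*(2-ξ))/(ξ*(2-ξ)) = (1-ξ)^2/(ξ*(2-ξ)) := by ring_nf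
  have e2 : (1-ξ)^2/(ξ*(2-ξ)) ≤ (1-ξ)^2/ξ := by
    apply div_le_div_of_nonneg_left (by positivity) h0
    nlinarith
  linarith [e1 ▸ h]

lemma T1f_hasDeriv {ξ : ℝ} (h0 : 0 < ξ) (h1 : ξ < 1) :
    HasDerivAt T1f
      ((-(ξ⁻¹ + (2-ξ)⁻¹ * (-1)) * (1-ξ) - (-(Real.log ξ + Real.log (2-ξ))) * (-1)) / (1-ξ)^2) ξ := by
  have h2 : (0:ℝ) < 2 - ξ := by linarith
  have hlog2 : HasDerivAt (fun ξ : ℝ => Real.log (2-ξ)) ((2-ξ)⁻¹ * (-1)) ξ :=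
    (Real.hasDerivAt_log h2.ne').comp ξ ((hasDerivAt_id ξ).const_sub 2)
  have hN : HasDerivAt (fun ξ : ℝ => -(Real.log ξ + Real.log (2-ξ)))
      (-(ξ⁻¹ + (2-ξ)⁻¹ * (-1))) ξ := ((Real.hasDerivAt_log h0.ne').add hlog2).neg
  have hD : HasDerivAt (fun ξ : ℝ => 1 - ξ) (-1) ξ := (hasDerivAt_id ξ).const_sub 1
  exact hN.div hD (by intro h; nlinarith)

lemma T1f_anti : AntitoneOn T1f (Ioo (0:ℝ) 1) := by
  apply antitoneOn_of_deriv_nonpos (convex_Ioo 0 1)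
  · exact fun x hx => (T1f_hasDeriv hx.1 hx.2).differentiableAt.continuousAt.continuousWithinAt
  · rw [interior_Ioo]
    exact fun x hx => (T1f_hasDeriv hx.1 hx.2).differentiableAt.differentiableWithinAt
  · rw [interior_Ioo]
    rintro x ⟨h0, h1⟩
    rw [(T1f_hasDeriv h0 h1).deriv]
    apply div_nonpos_of_nonpos_of_nonneg _ (sq_nonneg _)
    have hc := core2 h0 h1
    have h2 : (0:ℝ) < 2 - x := by linarith
    have e : (x⁻¹ - (2-x)⁻¹)*(1-x) = 2*((1-x)^2/(x*(2-x))) := by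
      field_simp; ring
    have e2 : (1-x)^2/x ≤ 2*((1-x)^2/(x*(2-x))) := by
      rw [mul_div_assoc'] at *
      rw [div_le_div_iff₀ h0 (by positivity)]
      nlinarith [mul_nonneg (mul_nonneg (sq_nonneg (1-x)) h0.le) h0.le]
    linarith [e, e2, hc]

lemma core2s {ξ : ℝ} (h0 : 0 < ξ) (h1 : ξ < 1) :
    -(Real.log ξ + Real.log (2-ξ)) ≤ (1-ξ)^2/(ξ*(2-ξ)) := by
  have h2 : (0:ℝ) < 2 - ξ := by linarith
  have hy : 0 < ξ * (2-ξ) := mul_pos h0 h2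
  have h := corelog hy
  rw [Real.log_mul h0.ne' h2.ne'] at h
  have e1 : (1 - ξ*(2-ξ))/(ξ*(2-ξ)) = (1-ξ)^2/(ξ*(2-ξ)) := by ring_nf
  linarith [e1 ▸ h]

lemma phi_hasDeriv {ξ : ℝ} (h0 : 0 < ξ) (h1 : ξ < 1) :
    HasDerivAt (fun ξ : ℝ => -Real.log (2-ξ) + T1f ξ)
      ((2-ξ)⁻¹ + ((-(ξ⁻¹ - (2-ξ)⁻¹))*(1-ξ) - (Real.log ξ + Real.log (2-ξ)))/(1-ξ)^2) ξ := by
  have h2 : (0:ℝ) < 2 - ξ := by linarith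
  have hlog2 : HasDerivAt (fun ξ : ℝ => Real.log (2-ξ)) ((2-ξ)⁻¹ * (-1)) ξ :=
    (Real.hasDerivAt_log h2.ne').comp ξ ((hasDerivAt_id ξ).const_sub 2)
  have h := hlog2.neg.add (T1f_hasDeriv h0 h1)
  refine h.congr_deriv ?_
  ring

lemma phi_anti : AntitoneOn (fun ξ : ℝ => -Real.log (2-ξ) + T1f ξ) (Ioo (0:ℝ) 1) := by
  apply antitoneOn_of_deriv_nonpos (convex_Ioo 0 1)
  · exact fun x hx => (phi_hasDeriv hx.1 hx.2).differentiableAt.continuousAt.continuousWithinAt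
  · rw [interior_Ioo]
    exact fun x hx => (phi_hasDeriv hx.1 hx.2).differentiableAt.differentiableWithinAt
  · rw [interior_Ioo]
    rintro x ⟨h0, h1⟩
    rw [(phi_hasDeriv h0 h1).deriv]
    have h2 : (0:ℝ) < 2 - x := by linarith
    have hc := core2s h0 h1
    have h1x : ((1:ℝ)-x)^2 ≠ 0 := pow_ne_zero 2 (sub_ne_zero_of_ne h1.ne')
    have eE : ((2-x)⁻¹*(1-x)^2 + ((-(x⁻¹ - (2-x)⁻¹))*(1-x) - (Real.log x + Real.log (2-x))))/(1-x)^2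
        = (2-x)⁻¹ + ((-(x⁻¹ - (2-x)⁻¹))*(1-x) - (Real.log x + Real.log (2-x)))/(1-x)^2 := by
      rw [add_div, mul_div_cancel_right₀ _ h1x]
    rw [← eE]
    apply div_nonpos_of_nonpos_of_nonneg _ (sq_nonneg _)
    have a1 : (2-x)⁻¹*(1-x)^2 = (1-x)^2/(2-x) := by ring
    have a2 : (-(x⁻¹ - (2-x)⁻¹))*(1-x) = -(2*((1-x)^2/(x*(2-x)))) := by
      field_simp
      ring
    have a3 : (1-x)^2/(2-x) ≤ (1-x)^2/(x*(2-x)) := by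
      apply div_le_div_of_nonneg_left (sq_nonneg _) (by positivity)
      nlinarith
    linarith [a1, a2, a3, hc]

lemma B2_hasDeriv {vb w ξ : ℝ} (hw : 0 < w) (h0 : 0 < ξ) (h1 : ξ < 1) :
    HasDerivAt (fun ξ : ℝ => S2f vb w ξ + T2f vb w ξ)
      (((vb-w)/w)/(1-ξ)^2 + ((-ξ⁻¹)*(1-ξ) + (Real.log w - Real.log ξ - Real.log vb))/(1-ξ)^2) ξ := by
  have hne : (1:ℝ) - ξ ≠ 0 := by intro h; nlinarith
  have hden : HasDerivAt (fun x : ℝ => (1-x)*w) (-1*w) ξ :=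
    ((hasDerivAt_id ξ).const_sub 1).mul_const w
  have hS : HasDerivAt (fun x : ℝ => (vb-w)/((1-x)*w))
      ((0*((1-ξ)*w) - (vb-w)*(-1*w))/((1-ξ)*w)^2) ξ :=
    (hasDerivAt_const ξ (vb-w)).div hden (by
      intro h
      rcases mul_eq_zero.1 h with h' | h' <;> [exact hne h'; exact hw.ne' h'])
  have hN : HasDerivAt (fun x : ℝ => Real.log w - Real.log x - Real.log vb) (-ξ⁻¹) ξ :=
    ((Real.hasDerivAt_log h0.ne').const_sub (Real.log w)).sub_const (Real.log vb)
  have hD : HasDerivAt (fun x : ℝ => 1 - x) (-1) ξ := (hasDerivAt_id ξ).const_sub 1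
  have hT : HasDerivAt (fun x : ℝ => (Real.log w - Real.log x - Real.log vb)/(1-x))
      (((-ξ⁻¹)*(1-ξ) - (Real.log w - Real.log ξ - Real.log vb)*(-1))/(1-ξ)^2) ξ :=
    hN.div hD hne
  have h := hS.add hT
  refine h.congr_deriv ?_
  field_simp
  ring

lemma B2_anti {vb w : ℝ} (hw : 0 < w) (hwv : w < vb) :
    AntitoneOn (fun ξ : ℝ => S2f vb w ξ + T2f vb w ξ) (Ioc (0:ℝ) (2 - vb/w)) := by
  have hk : 1 < vb/w := (one_lt_div hw).2 hwv
  have hmem : ∀ x ∈ Ioc (0:ℝ) (2 - vb/w), 0 < x ∧ x < 1 := by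
    rintro x ⟨hx0, hx1⟩
    exact ⟨hx0, by linarith⟩
  apply antitoneOn_of_deriv_nonpos (convex_Ioc _ _)
  · intro x hx
    obtain ⟨hx0, hx1⟩ := hmem x hx
    exact (B2_hasDeriv hw hx0 hx1).differentiableAt.continuousAt.continuousWithinAt
  · rw [interior_Ioc]
    rintro x ⟨hx0, hx1⟩
    exact (B2_hasDeriv hw hx0 (by linarith)).differentiableAt.differentiableWithinAt
  · rw [interior_Ioc]
    rintro x ⟨hx0, hx1⟩
    have h1 : x < 1 := by linarith
    have h2 : (0:ℝ) < 2 - x := by linarith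
    have hK : vb/w < 2 - x := by linarith
    rw [(B2_hasDeriv hw hx0 h1).deriv]
    rw [← add_div]
    apply div_nonpos_of_nonpos_of_nonneg _ (sq_nonneg _)
    -- goal: (vb-w)/w + ((-x⁻¹)*(1-x) + (log w - log x - log vb)) ≤ 0
    have hvb : (0:ℝ) < vb := by linarith
    have c1 : Real.log (2-x) - Real.log (vb/w) ≤ (2-x) - vb/w := by
      have h := Real.log_le_sub_one_of_pos (show (0:ℝ) < (2-x)/(vb/w) by positivity)
      rw [Real.log_div h2.ne' (by positivity)] at h
      have e : (2-x)/(vb/w) = ((2-x) - vb/w)/(vb/w) + 1 := by field_simp; ring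
      have e2 : ((2-x) - vb/w)/(vb/w) ≤ (2-x) - vb/w :=
        div_le_self (by linarith) hk.le
      linarith
    have c2 := core2s hx0 h1
    have c3 : (1-x)^2/(x*(2-x)) ≤ (1-x)^2/x := by
      apply div_le_div_of_nonneg_left (sq_nonneg _) hx0
      nlinarith
    have c4 : Real.log (vb/w) = Real.log vb - Real.log w := Real.log_div hvb.ne' hw.ne'
    have c5 : (vb-w)/w = vb/w - 1 := by field_simp
    have c6 : (-x⁻¹)*(1-x) = -((1-x)/x) := by field_simp
    have c7 : (1-x) + (1-x)^2/x - (1-x)/x = 0 := by field_simp; ring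
    linarith

lemma Qle {S T S' T' : ℝ} (hT : 0 < T) (hT' : 0 < T') (hS : 0 < S) (hS' : 0 < S')
    (h : T' * S ≤ T * S') : T'/(S'+T') ≤ T/(S+T) := by
  rw [div_le_div_iff₀ (by linarith) (by linarith)]
  nlinarith

set_option maxHeartbeats 1600000 in
/-- Monotone comparative statics of the optimal randomized pricing mechanism under the quantile
ambiguity set: a higher conversion rate `ξ‡ ≥ ξ†` yields a price distribution whose cdf `q_{ξ‡}`
is pointwise at most `q_{ξ†}`, i.e., it stochastically dominates the one for `ξ†`. -/
theorem stmt16 (vbar ω : ℝ) (hω0 : 0 < ω) (hωv : ω < vbar)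
    (phat : ℝ → ℝ) (hphat : ∀ ξ, phat ξ = min ((2 - ξ) * ω) vbar)
    (r : ℝ → ℝ)
    (hr : ∀ ξ ∈ Ioo (0 : ℝ) 1,
      ((2 - ξ) * ω < vbar →
        r ξ = (Real.log vbar - Real.log (ω * (2 - ξ)) -
          Real.log (ξ * (2 - ξ)) / (1 - ξ) + 1)⁻¹) ∧
      (vbar ≤ (2 - ξ) * ω →
        r ξ = ((vbar - ω) / ((1 - ξ) * ω) +
          (Real.log ω - Real.log (ξ * vbar)) / (1 - ξ))⁻¹))
    (q : ℝ → ℝ → ℝ)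
    (hq : ∀ ξ ∈ Ioo (0 : ℝ) 1, ∀ v : ℝ,
      q ξ v = if v < ξ * phat ξ then 0
        else if v < ω then (r ξ / (1 - ξ)) * Real.log (v / (ξ * phat ξ))
        else if v < phat ξ then 1 - r ξ * Real.log (vbar / phat ξ)
        else 1 - r ξ * Real.log (vbar / v)) :
    ∀ ξd ξdd : ℝ, ξd ∈ Ioo (0 : ℝ) 1 → ξdd ∈ Ioo (0 : ℝ) 1 → ξd ≤ ξdd →
      ∀ v ∈ Icc (0 : ℝ) vbar, q ξdd v ≤ q ξd v := by
  intro ξd ξdd hξd hξdd hle v hv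
  obtain ⟨hd0, hd1⟩ := hξd
  obtain ⟨hdd0, hdd1⟩ := hξdd
  have hvb0 : (0:ℝ) < vbar := lt_trans hω0 hωv
  -- basic facts about phat
  have hpw : ∀ ξ, 0 < ξ → ξ < 1 → ω < phat ξ := by
    intro ξ h0 h1
    rw [hphat]
    exact lt_min (by nlinarith) hωv
  have hpv : ∀ ξ, phat ξ ≤ vbar := fun ξ => by rw [hphat]; exact min_le_right _ _
  have hple : ∀ ξ, phat ξ ≤ (2-ξ)*ω := fun ξ => by rw [hphat]; exact min_le_left _ _
  have haw : ∀ ξ, 0 < ξ → ξ < 1 → ξ * phat ξ < ω := by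
    intro ξ h0 h1
    have h := hple ξ
    nlinarith [mul_le_mul_of_nonneg_left h h0.le, mul_pos hω0 (mul_pos (sub_pos.2 h1) (sub_pos.2 h1))]
  have hp0 : ∀ ξ, 0 < ξ → ξ < 1 → 0 < phat ξ := fun ξ h0 h1 => lt_trans hω0 (hpw ξ h0 h1)
  have ha0d : 0 < ξd * phat ξd := mul_pos hd0 (hp0 _ hd0 hd1)
  have ha0dd : 0 < ξdd * phat ξdd := mul_pos hdd0 (hp0 _ hdd0 hdd1)
  -- case translations of the r formula
  have hcase1 : ∀ ξ, 0 < ξ → ξ < 1 → (2-ξ)*ω < vbar →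
      r ξ = (S1f vbar ω ξ + T1f ξ)⁻¹ := by
    intro ξ h0 h1 hc
    have h2 : (0:ℝ) < 2 - ξ := by linarith
    rw [(hr ξ ⟨h0, h1⟩).1 hc]
    congr 1
    rw [Real.log_mul hω0.ne' h2.ne', Real.log_mul h0.ne' h2.ne']
    unfold S1f T1f
    ring
  have hcase2 : ∀ ξ, 0 < ξ → ξ < 1 → vbar ≤ (2-ξ)*ω →
      r ξ = (S2f vbar ω ξ + T2f vbar ω ξ)⁻¹ := by
    intro ξ h0 h1 hc
    rw [(hr ξ ⟨h0, h1⟩).2 hc]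
    congr 1
    rw [Real.log_mul h0.ne' hvb0.ne']
    unfold S2f T2f
    ring
  -- positivity facts
  have hT1pos : ∀ ξ, 0 < ξ → ξ < 1 → 0 < T1f ξ := by
    intro ξ h0 h1
    have h2 : (0:ℝ) < 2 - ξ := by linarith
    have hlt : ξ * (2-ξ) < 1 := by nlinarith [sq_nonneg (1-ξ), mul_pos (sub_pos.2 h1) (sub_pos.2 h1)]
    have hl := Real.log_neg (mul_pos h0 h2) hlt
    rw [Real.log_mul h0.ne' h2.ne'] at hl
    unfold T1f
    exact div_pos (by linarith) (by linarith)
  have hS1pos : ∀ ξ, 0 < ξ → ξ < 1 → (2-ξ)*ω ≤ vbar → 0 < S1f vbar ω ξ := by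
    intro ξ h0 h1 hc
    have h2 : (0:ℝ) < 2 - ξ := by linarith
    have hl := Real.log_le_log (by positivity : (0:ℝ) < ω*(2-ξ)) (by nlinarith : ω*(2-ξ) ≤ vbar)
    rw [Real.log_mul hω0.ne' h2.ne'] at hl
    unfold S1f
    linarith
  have hS2pos : ∀ ξ, 0 < ξ → ξ < 1 → 0 < S2f vbar ω ξ := by
    intro ξ h0 h1
    unfold S2f
    exact div_pos (by linarith) (by nlinarith)
  have hT2pos : ∀ ξ, 0 < ξ → ξ < 1 → vbar ≤ (2-ξ)*ω → 0 < T2f vbar ω ξ := by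
    intro ξ h0 h1 hc
    have hξv : ξ * vbar < ω := by
      nlinarith [mul_le_mul_of_nonneg_left hc h0.le,
        mul_pos hω0 (mul_pos (sub_pos.2 h1) (sub_pos.2 h1))]
    have hl := Real.log_lt_log (by positivity : (0:ℝ) < ξ*vbar) hξv
    rw [Real.log_mul h0.ne' hvb0.ne'] at hl
    unfold T2f
    exact div_pos (by linarith) (by linarith)
  have hrpos : ∀ ξ, 0 < ξ → ξ < 1 → 0 < r ξ := by
    intro ξ h0 h1
    rcases lt_or_ge ((2-ξ)*ω) vbar with hc | hc
    · rw [hcase1 ξ h0 h1 hc]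
      exact inv_pos.2 (by linarith [hS1pos ξ h0 h1 hc.le, hT1pos ξ h0 h1])
    · rw [hcase2 ξ h0 h1 hc]
      exact inv_pos.2 (by linarith [hS2pos ξ h0 h1, hT2pos ξ h0 h1 hc])
  -- monotonicity of r
  have hrle : r ξd ≤ r ξdd := by
    rcases lt_or_ge ((2-ξd)*ω) vbar with hcd | hcd
    · have hcdd : (2-ξdd)*ω < vbar := by nlinarith [mul_nonneg (sub_nonneg.2 hle) hω0.le]
      rw [hcase1 ξd hd0 hd1 hcd, hcase1 ξdd hdd0 hdd1 hcdd]
      have hmono := phi_anti (show ξd ∈ Ioo (0:ℝ) 1 from ⟨hd0,hd1⟩)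
        (show ξdd ∈ Ioo (0:ℝ) 1 from ⟨hdd0,hdd1⟩) hle
      dsimp only at hmono
      have hpos : 0 < S1f vbar ω ξdd + T1f ξdd := by
        linarith [hS1pos ξdd hdd0 hdd1 hcdd.le, hT1pos ξdd hdd0 hdd1]
      apply inv_anti₀ hpos
      unfold S1f
      linarith
    · rcases lt_or_ge ((2-ξdd)*ω) vbar with hcdd | hcdd
      · -- mixed case
        have hξ0d : ξd ≤ 2 - vbar/ω := by
          have h := (div_le_iff₀ hω0).2 hcd
          linarith
        have hξ0dd : 2 - vbar/ω < ξdd := by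
          have h := (lt_div_iff₀ hω0).2 hcdd
          linarith
        have hξ00 : 0 < 2 - vbar/ω := lt_of_lt_of_le hd0 hξ0d
        have hK1 : 1 < vbar/ω := (one_lt_div hω0).2 hωv
        have hξ01 : 2 - vbar/ω < 1 := by linarith
        have h2ξ0 : 2 - (2 - vbar/ω) = vbar/ω := by ring
        have hjS : S1f vbar ω (2 - vbar/ω) = S2f vbar ω (2 - vbar/ω) := by
          unfold S1f S2f
          rw [h2ξ0, Real.log_div hvb0.ne' hω0.ne']
          rw [show (1 - (2 - vbar/ω))*ω = vbar - ω by field_simp; ring]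
          rw [div_self (ne_of_gt (by linarith : (0:ℝ) < vbar - ω))]
          ring
        have hjT : T1f (2 - vbar/ω) = T2f vbar ω (2 - vbar/ω) := by
          unfold T1f T2f
          rw [h2ξ0, Real.log_div hvb0.ne' hω0.ne']
          ring
        rw [hcase2 ξd hd0 hd1 hcd, hcase1 ξdd hdd0 hdd1 hcdd]
        have h1 : S1f vbar ω ξdd + T1f ξdd ≤ S1f vbar ω (2 - vbar/ω) + T1f (2 - vbar/ω) := by
          have hmono := phi_anti (show (2 - vbar/ω) ∈ Ioo (0:ℝ) 1 from ⟨hξ00,hξ01⟩)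
            (show ξdd ∈ Ioo (0:ℝ) 1 from ⟨hdd0,hdd1⟩) hξ0dd.le
          dsimp only at hmono
          unfold S1f
          linarith
        have h2 : S2f vbar ω (2 - vbar/ω) + T2f vbar ω (2 - vbar/ω)
            ≤ S2f vbar ω ξd + T2f vbar ω ξd :=
          B2_anti hω0 hωv (show ξd ∈ Ioc (0:ℝ) (2 - vbar/ω) from ⟨hd0, hξ0d⟩)
            (show (2 - vbar/ω) ∈ Ioc (0:ℝ) (2 - vbar/ω) from ⟨hξ00, le_refl _⟩) hξ0d
        have hpos : 0 < S1f vbar ω ξdd + T1f ξdd := by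
          linarith [hS1pos ξdd hdd0 hdd1 hcdd.le, hT1pos ξdd hdd0 hdd1]
        apply inv_anti₀ hpos
        calc S1f vbar ω ξdd + T1f ξdd ≤ S1f vbar ω (2 - vbar/ω) + T1f (2 - vbar/ω) := h1
          _ = S2f vbar ω (2 - vbar/ω) + T2f vbar ω (2 - vbar/ω) := by rw [hjS, hjT]
          _ ≤ _ := h2
      · rw [hcase2 ξd hd0 hd1 hcd, hcase2 ξdd hdd0 hdd1 hcdd]
        have hξddle : ξdd ≤ 2 - vbar/ω := by
          have h := (div_le_iff₀ hω0).2 hcdd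
          linarith
        have hmono := B2_anti hω0 hωv
          (show ξd ∈ Ioc (0:ℝ) (2 - vbar/ω) from ⟨hd0, le_trans hle hξddle⟩)
          (show ξdd ∈ Ioc (0:ℝ) (2 - vbar/ω) from ⟨hdd0, hξddle⟩) hle
        have hpos : 0 < S2f vbar ω ξdd + T2f vbar ω ξdd := by
          linarith [hS2pos ξdd hdd0 hdd1, hT2pos ξdd hdd0 hdd1 hcdd]
        exact inv_anti₀ hpos hmono
  -- monotonicity of the support bounds
  have hM1 : ξd * phat ξd ≤ ξdd * phat ξdd := by
    rw [hphat, hphat]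
    rcases le_total ((2-ξdd)*ω) vbar with h | h
    · rw [min_eq_left h]
      calc ξd * min ((2-ξd)*ω) vbar ≤ ξd * ((2-ξd)*ω) :=
            mul_le_mul_of_nonneg_left (min_le_left _ _) hd0.le
        _ ≤ ξdd * ((2-ξdd)*ω) := by
            nlinarith [mul_nonneg (mul_nonneg hω0.le (sub_nonneg.2 hle))
              (show (0:ℝ) ≤ 2-ξd-ξdd by linarith)]
    · rw [min_eq_right h]
      calc ξd * min ((2-ξd)*ω) vbar ≤ ξd * vbar :=
            mul_le_mul_of_nonneg_left (min_le_right _ _) hd0.le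
        _ ≤ ξdd * vbar := by nlinarith [mul_nonneg (sub_nonneg.2 hle) hvb0.le]
  have hM2 : phat ξdd ≤ phat ξd := by
    rw [hphat, hphat]
    exact min_le_min (by nlinarith [mul_nonneg (sub_nonneg.2 hle) hω0.le]) (le_refl _)
  have hlogp_le : Real.log (phat ξd) ≤ Real.log vbar := Real.log_le_log (hp0 _ hd0 hd1) (hpv _)
  have hM4 : r ξd * (Real.log vbar - Real.log (phat ξd))
      ≤ r ξdd * (Real.log vbar - Real.log (phat ξdd)) := by
    apply mul_le_mul hrle _ (by linarith) (hrpos _ hdd0 hdd1).le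
    have h := Real.log_le_log (hp0 _ hdd0 hdd1) hM2
    linarith
  -- the endpoint value of q at ω⁻
  have hQeq1 : ∀ ξ, 0 < ξ → ξ < 1 → (2-ξ)*ω < vbar →
      r ξ/(1-ξ) * (Real.log ω - Real.log (ξ * phat ξ)) = T1f ξ / (S1f vbar ω ξ + T1f ξ) := by
    intro ξ h0 h1 hc
    have h2 : (0:ℝ) < 2-ξ := by linarith
    have hpe : phat ξ = (2-ξ)*ω := by rw [hphat]; exact min_eq_left hc.le
    rw [hcase1 ξ h0 h1 hc, hpe,
      Real.log_mul h0.ne' (by positivity : ((2-ξ)*ω) ≠ 0),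
      Real.log_mul h2.ne' hω0.ne']
    unfold S1f T1f
    ring
  have hQeq2 : ∀ ξ, 0 < ξ → ξ < 1 → vbar ≤ (2-ξ)*ω →
      r ξ/(1-ξ) * (Real.log ω - Real.log (ξ * phat ξ))
        = T2f vbar ω ξ / (S2f vbar ω ξ + T2f vbar ω ξ) := by
    intro ξ h0 h1 hc
    have hpe : phat ξ = vbar := by rw [hphat]; exact min_eq_right hc
    rw [hcase2 ξ h0 h1 hc, hpe, Real.log_mul h0.ne' hvb0.ne']
    unfold S2f T2f
    ring
  have hQ1cmp : ∀ a b, 0 < a → a ≤ b → b < 1 → (2-a)*ω ≤ vbar →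
      T1f b / (S1f vbar ω b + T1f b) ≤ T1f a / (S1f vbar ω a + T1f a) := by
    intro a b ha0 hab hb1 hca
    have ha1 : a < 1 := lt_of_le_of_lt hab hb1
    have hb0 : 0 < b := lt_of_lt_of_le ha0 hab
    have hSa := hS1pos a ha0 ha1 hca
    have hcb : (2-b)*ω ≤ vbar := by nlinarith [mul_nonneg (sub_nonneg.2 hab) hω0.le]
    have hSb := hS1pos b hb0 hb1 hcb
    have hTa := hT1pos a ha0 ha1
    have hTb := hT1pos b hb0 hb1
    have hTle : T1f b ≤ T1f a :=
      T1f_anti (show a ∈ Ioo (0:ℝ) 1 from ⟨ha0,ha1⟩) (show b ∈ Ioo (0:ℝ) 1 from ⟨hb0,hb1⟩) hab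
    have hSle : S1f vbar ω a ≤ S1f vbar ω b := by
      unfold S1f
      have h := Real.log_le_log (show (0:ℝ) < 2-b by linarith) (show 2-b ≤ 2-a by linarith)
      linarith
    exact Qle hTa hTb hSa hSb (mul_le_mul hTle hSle hSa.le hTa.le)
  have hQ2cmp : ∀ a b, 0 < a → a ≤ b → b < 1 → vbar ≤ (2-b)*ω →
      T2f vbar ω b / (S2f vbar ω b + T2f vbar ω b)
        ≤ T2f vbar ω a / (S2f vbar ω a + T2f vbar ω a) := by
    intro a b ha0 hab hb1 hcb
    have ha1 : a < 1 := lt_of_le_of_lt hab hb1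
    have hb0 : 0 < b := lt_of_lt_of_le ha0 hab
    have hca : vbar ≤ (2-a)*ω := by nlinarith [mul_nonneg (sub_nonneg.2 hab) hω0.le]
    have hTb := hT2pos b hb0 hb1 hcb
    have hTa := hT2pos a ha0 ha1 hca
    have hSa := hS2pos a ha0 ha1
    have hSb := hS2pos b hb0 hb1
    apply Qle hTa hTb hSa hSb
    unfold S2f T2f
    rw [div_mul_div_comm, div_mul_div_comm]
    rw [show (1-b)*((1-a)*ω) = (1-a)*((1-b)*ω) by ring]
    have hden : (0:ℝ) < (1-a)*((1-b)*ω) :=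
      mul_pos (by linarith) (mul_pos (by linarith) hω0)
    apply (div_le_div_iff_of_pos_right hden).2
    apply mul_le_mul_of_nonneg_right _ (by linarith : (0:ℝ) ≤ vbar - ω)
    have h := Real.log_le_log ha0 hab
    linarith
  have hM5 : r ξdd/(1-ξdd) * (Real.log ω - Real.log (ξdd * phat ξdd)) ≤
      r ξd/(1-ξd) * (Real.log ω - Real.log (ξd * phat ξd)) := by
    rcases lt_or_ge ((2-ξd)*ω) vbar with hcd | hcd
    · have hcdd : (2-ξdd)*ω < vbar := by nlinarith [mul_nonneg (sub_nonneg.2 hle) hω0.le]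
      rw [hQeq1 ξd hd0 hd1 hcd, hQeq1 ξdd hdd0 hdd1 hcdd]
      exact hQ1cmp ξd ξdd hd0 hle hdd1 hcd.le
    · rcases lt_or_ge ((2-ξdd)*ω) vbar with hcdd | hcdd
      · -- mixed case
        have hξ0d : ξd ≤ 2 - vbar/ω := by
          have h := (div_le_iff₀ hω0).2 hcd
          linarith
        have hξ0dd : 2 - vbar/ω < ξdd := by
          have h := (lt_div_iff₀ hω0).2 hcdd
          linarith
        have hξ00 : 0 < 2 - vbar/ω := lt_of_lt_of_le hd0 hξ0d
        have hK1 : 1 < vbar/ω := (one_lt_div hω0).2 hωv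
        have hξ01 : 2 - vbar/ω < 1 := by linarith
        have h2ξ0 : 2 - (2 - vbar/ω) = vbar/ω := by ring
        have hx0eq : (2 - (2 - vbar/ω))*ω = vbar := by
          rw [h2ξ0]
          exact div_mul_cancel₀ _ hω0.ne'
        have hjS : S1f vbar ω (2 - vbar/ω) = S2f vbar ω (2 - vbar/ω) := by
          unfold S1f S2f
          rw [h2ξ0, Real.log_div hvb0.ne' hω0.ne']
          rw [show (1 - (2 - vbar/ω))*ω = vbar - ω by field_simp; ring]
          rw [div_self (ne_of_gt (by linarith : (0:ℝ) < vbar - ω))]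
          ring
        have hjT : T1f (2 - vbar/ω) = T2f vbar ω (2 - vbar/ω) := by
          unfold T1f T2f
          rw [h2ξ0, Real.log_div hvb0.ne' hω0.ne']
          ring
        rw [hQeq2 ξd hd0 hd1 hcd, hQeq1 ξdd hdd0 hdd1 hcdd]
        calc T1f ξdd / (S1f vbar ω ξdd + T1f ξdd)
            ≤ T1f (2 - vbar/ω) / (S1f vbar ω (2 - vbar/ω) + T1f (2 - vbar/ω)) :=
              hQ1cmp (2 - vbar/ω) ξdd hξ00 hξ0dd.le hdd1 (le_of_eq hx0eq)
          _ = T2f vbar ω (2 - vbar/ω) / (S2f vbar ω (2 - vbar/ω) + T2f vbar ω (2 - vbar/ω)) := by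
              rw [hjS, hjT]
          _ ≤ T2f vbar ω ξd / (S2f vbar ω ξd + T2f vbar ω ξd) :=
              hQ2cmp ξd (2 - vbar/ω) hd0 hξ0d hξ01 (le_of_eq hx0eq.symm)
      · rw [hQeq2 ξd hd0 hd1 hcd, hQeq2 ξdd hdd0 hdd1 hcdd]
        have hξddle : ξdd ≤ 2 - vbar/ω := by
          have h := (div_le_iff₀ hω0).2 hcdd
          linarith
        exact hQ2cmp ξd ξdd hd0 hle hdd1 hcdd
  -- case analysis on v
  obtain ⟨hv0', hvv⟩ := hv
  rw [hq ξd ⟨hd0,hd1⟩ v, hq ξdd ⟨hdd0,hdd1⟩ v]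
  have hawd := haw ξd hd0 hd1
  have hawdd := haw ξdd hdd0 hdd1
  rcases lt_or_ge v (ξd * phat ξd) with h1 | h1
  · rw [if_pos h1, if_pos (lt_of_lt_of_le h1 hM1)]
  · rcases lt_or_ge v (ξdd * phat ξdd) with h2 | h2
    · rw [if_pos h2, if_neg (not_lt.2 h1), if_pos (lt_trans h2 hawdd)]
      have hv0'' : 0 < v := lt_of_lt_of_le ha0d h1
      apply mul_nonneg (div_nonneg (hrpos ξd hd0 hd1).le (by linarith))
      apply Real.log_nonneg
      rw [le_div_iff₀ ha0d]
      linarith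
    · rcases lt_or_ge v ω with h3 | h3
      · rw [if_neg (not_lt.2 h2), if_pos h3, if_neg (not_lt.2 h1), if_pos h3]
        have hvpos : 0 < v := lt_of_lt_of_le ha0dd h2
        rw [Real.log_div hvpos.ne' ha0dd.ne', Real.log_div hvpos.ne' ha0d.ne']
        have hAd : 0 ≤ r ξd/(1-ξd) := div_nonneg (hrpos ξd hd0 hd1).le (by linarith)
        have hAdd : 0 ≤ r ξdd/(1-ξdd) := div_nonneg (hrpos ξdd hdd0 hdd1).le (by linarith)
        have hlog_add : Real.log (ξd*phat ξd) ≤ Real.log (ξdd*phat ξdd) :=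
          Real.log_le_log ha0d hM1
        have hlogv1 : Real.log (ξdd*phat ξdd) ≤ Real.log v := Real.log_le_log ha0dd h2
        have hlogv2 : Real.log v ≤ Real.log ω := Real.log_le_log hvpos h3.le
        rcases le_total (r ξdd/(1-ξdd)) (r ξd/(1-ξd)) with hA | hA
        · have e : r ξd/(1-ξd) * (Real.log v - Real.log (ξd*phat ξd))
              - r ξdd/(1-ξdd) * (Real.log v - Real.log (ξdd*phat ξdd))
              = (r ξd/(1-ξd) - r ξdd/(1-ξdd)) * (Real.log v - Real.log (ξdd*phat ξdd))
                + r ξd/(1-ξd) * (Real.log (ξdd*phat ξdd) - Real.log (ξd*phat ξd)) := by ring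
          have p1 : 0 ≤ (r ξd/(1-ξd) - r ξdd/(1-ξdd)) * (Real.log v - Real.log (ξdd*phat ξdd)) :=
            mul_nonneg (by linarith) (by linarith)
          have p2 : 0 ≤ r ξd/(1-ξd) * (Real.log (ξdd*phat ξdd) - Real.log (ξd*phat ξd)) :=
            mul_nonneg hAd (by linarith)
          linarith
        · have e : r ξd/(1-ξd) * (Real.log v - Real.log (ξd*phat ξd))
              - r ξdd/(1-ξdd) * (Real.log v - Real.log (ξdd*phat ξdd))
              = (r ξdd/(1-ξdd) - r ξd/(1-ξd)) * (Real.log ω - Real.log v)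
                + (r ξd/(1-ξd) * (Real.log ω - Real.log (ξd*phat ξd))
                   - r ξdd/(1-ξdd) * (Real.log ω - Real.log (ξdd*phat ξdd))) := by ring
          have p1 : 0 ≤ (r ξdd/(1-ξdd) - r ξd/(1-ξd)) * (Real.log ω - Real.log v) :=
            mul_nonneg (by linarith) (by linarith)
          linarith [hM5]
      · have hvpos : 0 < v := lt_of_lt_of_le hω0 h3
        have hnb1d : ¬ v < ξd*phat ξd := not_lt.2 h1
        have hnb1dd : ¬ v < ξdd*phat ξdd := not_lt.2 h2
        have hnb2 : ¬ v < ω := not_lt.2 h3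
        rcases lt_or_ge v (phat ξdd) with h4 | h4
        · rw [if_neg hnb1dd, if_neg hnb2, if_pos h4, if_neg hnb1d, if_neg hnb2,
            if_pos (lt_of_lt_of_le h4 hM2)]
          rw [Real.log_div hvb0.ne' (hp0 ξdd hdd0 hdd1).ne',
            Real.log_div hvb0.ne' (hp0 ξd hd0 hd1).ne']
          linarith [hM4]
        · rcases lt_or_ge v (phat ξd) with h5 | h5
          · rw [if_neg hnb1dd, if_neg hnb2, if_neg (not_lt.2 h4), if_neg hnb1d, if_neg hnb2,
              if_pos h5]
            rw [Real.log_div hvb0.ne' hvpos.ne', Real.log_div hvb0.ne' (hp0 ξd hd0 hd1).ne']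
            have h6 : r ξd * (Real.log vbar - Real.log (phat ξd))
                ≤ r ξdd * (Real.log vbar - Real.log v) := by
              apply mul_le_mul hrle _ (by linarith) (hrpos ξdd hdd0 hdd1).le
              have h7 := Real.log_le_log hvpos h5.le
              linarith
            linarith
          · rw [if_neg hnb1dd, if_neg hnb2, if_neg (not_lt.2 h4), if_neg hnb1d, if_neg hnb2,
              if_neg (not_lt.2 h5)]
            rw [Real.log_div hvb0.ne' hvpos.ne']
            have hlv : Real.log v ≤ Real.log vbar := Real.log_le_log hvpos hvv
            nlinarith [mul_le_mul_of_nonneg_right hrle (sub_nonneg.2 hlv)]
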